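/- Let α₁, α₂, R > 0, Δ > 0, C > 0, V_DD > 0, and let a, d, χ, c', A be as follows: a = (α₁+α₂)/(2R), d = a + Δ, c' = α₂Δ/(2R), χ = d² − 4c' (assumed > 0), A = (α₂Δ − aR(d − √χ))/(2R√χ). Then the function V(t) = V_DD + (V_Δ − V_DD)·e^{−t/(2RC)}·(1 + 2t/(d+√χ))^{(−A+a)/(2RC)}·(1 + 2t/(d−√χ))^{A/(2RC)}, for any initial value V_Δ, satisfies V(0) = V_Δ and solves dV/dt = −V(t)/(C·R_g(t)) + U(t) on (0,∞), where 1/R_g(t) = 1/(α₁/(t+Δ) + α₂/t + 2R) and U(t) = V_DD·t·(t+Δ)/(C·(2Rt² + (α₁+α₂+2ΔR)t + α₂Δ)). -/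

import Mathlib

/-- The explicit trajectory for the mode `T↓↓₊` of the NOR gate: the function
`V(t) = V_DD + (V_Δ − V_DD)·e^{−t/(2RC)}·(1 + 2t/(d+√χ))^{(−A+a)/(2RC)}·(1 + 2t/(d−√χ))^{A/(2RC)}`
satisfies `V 0 = V_Δ` and solves `dV/dt = −V/(C·R_g t) + U t` on `(0,∞)`, where
`1/R_g t = 1/(α₁/(t+Δ) + α₂/t + 2R)` and
`U t = V_DD·t·(t+Δ)/(C·(2Rt² + (α₁+α₂+2ΔR)t + α₂Δ))`. -/
theorem stmt_16 (α₁ α₂ R Δ C VDD VΔ : ℝ)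
    (hα₁ : 0 < α₁) (hα₂ : 0 < α₂) (hR : 0 < R) (hΔ : 0 < Δ) (hC : 0 < C)
    (hV : 0 < VDD)
    (a d c' χ A : ℝ)
    (ha : a = (α₁ + α₂) / (2 * R)) (hd : d = a + Δ) (hc' : c' = α₂ * Δ / (2 * R))
    (hχ : χ = d ^ 2 - 4 * c') (hχpos : 0 < χ)
    (hA : A = (α₂ * Δ - a * R * (d - Real.sqrt χ)) / (2 * R * Real.sqrt χ)) :
    let V : ℝ → ℝ := fun t =>
      VDD + (VΔ - VDD) * Real.exp (-t / (2 * R * C)) *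
        (1 + 2 * t / (d + Real.sqrt χ)) ^ ((-A + a) / (2 * R * C)) *
        (1 + 2 * t / (d - Real.sqrt χ)) ^ (A / (2 * R * C))
    V 0 = VΔ ∧
    ∀ t : ℝ, 0 < t →
      HasDerivAt V
        (-(V t) / (C * (α₁ / (t + Δ) + α₂ / t + 2 * R)) +
          VDD * t * (t + Δ) /
            (C * (2 * R * t ^ 2 + (α₁ + α₂ + 2 * Δ * R) * t + α₂ * Δ))) t := by
  intro V
  have hs0 : 0 < Real.sqrt χ := Real.sqrt_pos.mpr hχpos
  set s := Real.sqrt χ with hsdef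
  have hs2 : s ^ 2 = d ^ 2 - 4 * c' := by rw [hsdef, Real.sq_sqrt hχpos.le, hχ]
  have hc'0 : 0 < c' := by rw [hc']; positivity
  have ha0 : 0 < a := by rw [ha]; positivity
  have hd0 : 0 < d := by rw [hd]; linarith
  have hsd : s < d := by nlinarith
  have hr₁ : 0 < d + s := by linarith
  have hr₂ : 0 < d - s := by linarith
  have ha' : 2 * R * a = α₁ + α₂ := by rw [ha]; field_simp
  have hc'' : 2 * R * c' = α₂ * Δ := by rw [hc']; field_simp
  have hA2 : 2 * R * s * A = α₂ * Δ - a * R * (d - s) := by rw [hA]; field_simp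
  constructor
  · show VDD + (VΔ - VDD) * Real.exp (-0 / (2 * R * C)) *
        (1 + 2 * 0 / (d + s)) ^ ((-A + a) / (2 * R * C)) *
        (1 + 2 * 0 / (d - s)) ^ (A / (2 * R * C)) = VΔ
    norm_num [Real.one_rpow]
  · intro t ht
    have hxpos : 0 < d + s + 2 * t := by linarith
    have hypos : 0 < d - s + 2 * t := by linarith
    have hfpos : (0:ℝ) < 1 + 2 * t / (d + s) := by positivity
    have hgpos : (0:ℝ) < 1 + 2 * t / (d - s) := by positivity
    have hPpos : 0 < 2 * R * t ^ 2 + (α₁ + α₂ + 2 * Δ * R) * t + α₂ * Δ := by positivity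
    -- derivative of exp part
    have hE : HasDerivAt (fun u : ℝ => Real.exp (-u / (2 * R * C)))
        (Real.exp (-t / (2 * R * C)) * (-1 / (2 * R * C))) t := by
      have h1 : HasDerivAt (fun u : ℝ => -u / (2 * R * C)) (-1 / (2 * R * C)) t := by
        simpa using ((hasDerivAt_id t).neg.div_const (2 * R * C))
      exact h1.exp
    have hfd : HasDerivAt (fun u : ℝ => 1 + 2 * u / (d + s)) (2 / (d + s)) t := by
      simpa using (((hasDerivAt_id t).const_mul 2).div_const (d + s)).const_add 1
    have hgd : HasDerivAt (fun u : ℝ => 1 + 2 * u / (d - s)) (2 / (d - s)) t := by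
      simpa using (((hasDerivAt_id t).const_mul 2).div_const (d - s)).const_add 1
    have hF : HasDerivAt (fun u : ℝ => (1 + 2 * u / (d + s)) ^ ((-A + a) / (2 * R * C)))
        (2 / (d + s) * ((-A + a) / (2 * R * C)) * (1 + 2 * t / (d + s)) ^ ((-A + a) / (2 * R * C) - 1)) t :=
      hfd.rpow_const (Or.inl hfpos.ne')
    have hG : HasDerivAt (fun u : ℝ => (1 + 2 * u / (d - s)) ^ (A / (2 * R * C)))
        (2 / (d - s) * (A / (2 * R * C)) * (1 + 2 * t / (d - s)) ^ (A / (2 * R * C) - 1)) t :=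
      hgd.rpow_const (Or.inl hgpos.ne')
    have hVd := (((hE.const_mul (VΔ - VDD)).mul hF).mul hG).const_add VDD
    have hA4 : 4 * s * A = d ^ 2 - s ^ 2 - 2 * a * (d - s) := by
      have h := mul_right_injective₀ hR.ne'
      refine h ?_
      show R * (4 * s * A) = R * (d ^ 2 - s ^ 2 - 2 * a * (d - s))
      linear_combination 2 * hA2 - 2 * hc'' + R * hs2
    have key : -1 / (2 * R * C)
        + 2 / (d + s) * ((-A + a) / (2 * R * C)) / (1 + 2 * t / (d + s))
        + 2 / (d - s) * (A / (2 * R * C)) / (1 + 2 * t / (d - s))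
        = -(t * (t + Δ)) / (C * (2 * R * t ^ 2 + (α₁ + α₂ + 2 * Δ * R) * t + α₂ * Δ)) := by
      have hP2 : 2 * R * t ^ 2 + (α₁ + α₂ + 2 * Δ * R) * t + α₂ * Δ
          = R * ((d + s + 2 * t) * (d - s + 2 * t)) / 2 := by
        linear_combination (-t) * ha' + (-2*R*t) * hd - hc'' + (R/2) * hs2
      have h1 : (1:ℝ) + 2 * t / (d + s) = (d + s + 2 * t) / (d + s) := by field_simp
      have h2 : (1:ℝ) + 2 * t / (d - s) = (d - s + 2 * t) / (d - s) := by field_simp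
      rw [hP2, h1, h2]
      field_simp
      linear_combination hA4 - 4 * t * hd
    have hSpos : 0 < α₁ / (t + Δ) + α₂ / t + 2 * R := by positivity
    have htΔ : (0:ℝ) < t + Δ := by linarith
    have hVt : V t = VDD + (VΔ - VDD) * Real.exp (-t / (2 * R * C)) *
        (1 + 2 * t / (d + s)) ^ ((-A + a) / (2 * R * C)) *
        (1 + 2 * t / (d - s)) ^ (A / (2 * R * C)) := rfl
    have hLHS : -V t / (C * (α₁ / (t + Δ) + α₂ / t + 2 * R)) +
        VDD * t * (t + Δ) / (C * (2 * R * t ^ 2 + (α₁ + α₂ + 2 * Δ * R) * t + α₂ * Δ)) =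
        (VDD - V t) * (t * (t + Δ)) /
          (C * (2 * R * t ^ 2 + (α₁ + α₂ + 2 * Δ * R) * t + α₂ * Δ)) := by
      field_simp
      ring
    have hF1 : (1 + 2 * t / (d + s)) ^ ((-A + a) / (2 * R * C) - 1)
        = (1 + 2 * t / (d + s)) ^ ((-A + a) / (2 * R * C)) / (1 + 2 * t / (d + s)) := by
      rw [Real.rpow_sub hfpos, Real.rpow_one]
    have hG1 : (1 + 2 * t / (d - s)) ^ (A / (2 * R * C) - 1)
        = (1 + 2 * t / (d - s)) ^ (A / (2 * R * C)) / (1 + 2 * t / (d - s)) := by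
      rw [Real.rpow_sub hgpos, Real.rpow_one]
    refine hVd.congr_deriv (Eq.symm ?_)
    rw [hLHS, hVt, hF1, hG1]
    simp only [Pi.mul_apply]
    linear_combination (-((VΔ - VDD) * Real.exp (-t / (2 * R * C)) *
        (1 + 2 * t / (d + s)) ^ ((-A + a) / (2 * R * C)) *
        (1 + 2 * t / (d - s)) ^ (A / (2 * R * C)))) * key
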